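/- For every n ≥ 1 and all X ∈ ℝ, T_n(X) = 1/2 + (1/2) ∫_0^X S_{n−1}(t) dt. -/

import Mathlib

open MeasureTheory

noncomputable section

/-- The `n`-th Laguerre polynomial `L_n(x) = Σ_{k=0}^n (n choose k) (−x)^k / k!`. -/
def laguerreFun (n : ℕ) (x : ℝ) : ℝ :=
  ∑ k ∈ Finset.range (n + 1), (n.choose k : ℝ) * (-x) ^ k / (k.factorial : ℝ)

lemma laguerre_cont (m : ℕ) : Continuous (laguerreFun m) := by
  unfold laguerreFun
  exact continuous_finset_sum _ fun k _ => by fun_prop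

lemma laguerre_zero (m : ℕ) : laguerreFun m 0 = 1 := by
  unfold laguerreFun
  rw [Finset.sum_eq_single 0]
  · simp
  · intro k _ hk
    simp [zero_pow hk]
  · simp

lemma hasDerivAt_laguerre (m : ℕ) (x : ℝ) :
    HasDerivAt (laguerreFun m)
      (-∑ k ∈ Finset.range m, (m.choose (k+1) : ℝ) * (-x) ^ k / (k.factorial : ℝ)) x := by
  have h : laguerreFun m = fun y =>
      1 + ∑ k ∈ Finset.range m, (m.choose (k+1) : ℝ) * (-y) ^ (k+1) / ((k+1).factorial : ℝ) := by
    funext y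
    rw [laguerreFun, Finset.sum_range_succ']
    simp [add_comm]
  rw [h]
  have hsum : HasDerivAt (fun y => ∑ k ∈ Finset.range m,
      (m.choose (k+1) : ℝ) * (-y) ^ (k+1) / ((k+1).factorial : ℝ))
      (∑ k ∈ Finset.range m, -((m.choose (k+1) : ℝ) * (-x) ^ k / (k.factorial : ℝ))) x := by
    apply HasDerivAt.fun_sum
    intro k _
    have h1 : HasDerivAt (fun y : ℝ => -y) (-1) x := (hasDerivAt_id x).neg
    have h2 := ((h1.fun_pow (k+1)).const_mul ((m.choose (k+1) : ℝ))).div_const ((k+1).factorial : ℝ)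
    convert h2 using 1
    · rfl
    rw [Nat.factorial_succ]
    have hk : (k.factorial : ℝ) ≠ 0 := Nat.cast_ne_zero.mpr k.factorial_ne_zero
    push_cast
    field_simp
  have := (hasDerivAt_const x (1:ℝ)).fun_add hsum
  simpa using this

lemma hasDerivAt_diff (m : ℕ) (x : ℝ) :
    HasDerivAt (fun y => laguerreFun m y - laguerreFun (m+1) y) (laguerreFun m x) x := by
  have h := (hasDerivAt_laguerre m x).fun_sub (hasDerivAt_laguerre (m+1) x)
  convert h using 1
  · rfl
  · rfl
  have hext : ∑ k ∈ Finset.range m, (m.choose (k+1) : ℝ) * (-x) ^ k / (k.factorial : ℝ)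
      = ∑ k ∈ Finset.range (m+1), (m.choose (k+1) : ℝ) * (-x) ^ k / (k.factorial : ℝ) := by
    rw [Finset.sum_range_succ, Nat.choose_succ_self]
    simp
  rw [laguerreFun, neg_sub_neg, hext, ← Finset.sum_sub_distrib]
  apply Finset.sum_congr rfl
  intro k _
  rw [Nat.choose_succ_succ]
  push_cast
  ring

lemma integral_laguerre (m : ℕ) (X : ℝ) :
    ∫ t in (0:ℝ)..X, laguerreFun m t = laguerreFun m X - laguerreFun (m+1) X := by
  have := intervalIntegral.integral_eq_sub_of_hasDerivAt
    (f := fun y => laguerreFun m y - laguerreFun (m+1) y)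
    (fun x _ => hasDerivAt_diff m x)
    ((laguerre_cont m).intervalIntegrable 0 X)
  rw [this]
  simp only [laguerre_zero]
  ring

/-- `T_n(X) = Σ_{k=0}^{n−1} (−1)^k L_k(X) + ((−1)^n/2) L_n(X)`. -/
def Tfun (n : ℕ) (X : ℝ) : ℝ :=
  (∑ k ∈ Finset.range n, (-1 : ℝ) ^ k * laguerreFun k X) +
    (-1 : ℝ) ^ n / 2 * laguerreFun n X

/-- `V_α(X) = 4 e^{−X/2} Σ_{k=0}^{d−1} C(d−1,k) T_{|α|+k}(X)`. -/
def Vfun (d : ℕ) (α : Fin d → ℕ) (X : ℝ) : ℝ :=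
  4 * Real.exp (-X / 2) *
    ∑ k ∈ Finset.range d, ((d - 1).choose k : ℝ) * Tfun ((∑ j, α j) + k) X

/-- `S_n(X) = Σ_{k=0}^{n} (−1)^k L_k(X)`. -/
def Sfun (n : ℕ) (X : ℝ) : ℝ :=
  ∑ k ∈ Finset.range (n + 1), (-1 : ℝ) ^ k * laguerreFun k X

lemma Sfun_cont (m : ℕ) : Continuous (Sfun m) :=
  continuous_finset_sum _ fun k _ => continuous_const.mul (laguerre_cont k)

theorem T_eq_half_add_integral (n : ℕ) (hn : 1 ≤ n) (X : ℝ) :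
    Tfun n X = 1 / 2 + (1 / 2) * ∫ t in (0 : ℝ)..X, Sfun (n - 1) t := by
  induction n, hn using Nat.le_induction with
  | base =>
    have h0 : ∀ t : ℝ, Sfun 0 t = 1 := by
      intro t; simp [Sfun, laguerreFun]
    simp only [h0]
    rw [intervalIntegral.integral_const]
    simp [Tfun, laguerreFun, Finset.sum_range_succ]
    ring
  | succ n hn ih =>
    have hstep : ∀ t : ℝ, Sfun n t = Sfun (n - 1) t + (-1 : ℝ) ^ n * laguerreFun n t := by
      intro t
      have hn' : n - 1 + 1 = n := by omega
      rw [Sfun, Sfun, hn', Finset.sum_range_succ]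
    have hsplit : (∫ t in (0:ℝ)..X, Sfun n t)
        = (∫ t in (0:ℝ)..X, Sfun (n-1) t) + (-1:ℝ)^n * ∫ t in (0:ℝ)..X, laguerreFun n t := by
      simp only [hstep]
      rw [intervalIntegral.integral_add ((Sfun_cont _).intervalIntegrable 0 X)
        ((continuous_const.fun_mul (laguerre_cont n)).intervalIntegrable 0 X),
        intervalIntegral.integral_const_mul]
    have hT : Tfun (n+1) X = Tfun n X
        + (-1:ℝ)^n/2 * (laguerreFun n X - laguerreFun (n+1) X) := by
      rw [Tfun, Tfun, Finset.sum_range_succ]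
      ring_nf
    rw [Nat.add_sub_cancel, hsplit, hT, ih, integral_laguerre]
    ring
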